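/- arXiv:1402.7108 — 2 statements merged into one kernel-verified Lean document; each statement's English description precedes it below -/
import Mathlib

section
/- Let K be a 2-category with a class W of 1-arrows satisfying BF1–BF4, and let V ⊆ W be a cofinal subclass: for every f : x ⟶ y in W there exist g : z ⟶ y in V and s : z ⟶ x with an invertible 2-cell s ≫ f ≅ g. Then every span x ⟵ u ⟶ y with backward leg in W is isomorphic (as a 1-arrow in the bicategory of fractions) to a span whose backward leg lies in V. -/
open CategoryTheory Bicategory

universe w v u

variable {B : Type u} [Bicategory.{w, v} B]

/-- Postcomposition with a 1-morphism, as a functor between hom-categories. -/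
@[simps] def Postcomp {a b : B} (q : a ⟶ b) (z : B) : (z ⟶ a) ⥤ (z ⟶ b) where
  obj h := h ≫ q
  map α := α ▷ q

/-- A 1-morphism is ff if all postcomposition functors are fully faithful. -/
def IsFF {a b : B} (q : a ⟶ b) : Prop :=
  ∀ z : B, (Postcomp q z).Full ∧ (Postcomp q z).Faithful

/-- Internal equivalence in a bicategory. -/
def IsIntEquiv {a b : B} (f : a ⟶ b) : Prop :=
  ∃ g : b ⟶ a, Nonempty (f ≫ g ≅ 𝟙 a) ∧ Nonempty (g ≫ f ≅ 𝟙 b)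

/-- A fully faithful singleton coverage on a 2-category; a 2-site. -/
structure TwoSite (B : Type u) [Bicategory.{w, v} B] where
  J : ∀ ⦃a b : B⦄, (a ⟶ b) → Prop
  id_mem : ∀ a : B, J (𝟙 a)
  comp_mem : ∀ ⦃a b c : B⦄ {f : a ⟶ b} {g : b ⟶ c}, J f → J g → J (f ≫ g)
  square : ∀ ⦃u x y : B⦄ (q : u ⟶ x), J q → ∀ f : y ⟶ x,
    ∃ (v : B) (k : v ⟶ y) (h : v ⟶ u), J k ∧ Nonempty (h ≫ q ≅ k ≫ f)
  ff : ∀ ⦃a b : B⦄ {q : a ⟶ b}, J q → IsFF q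

/-- A 1-arrow is J-locally split. -/
def LocallySplit (S : TwoSite B) {x y : B} (f : x ⟶ y) : Prop :=
  ∃ (u : B) (j : u ⟶ y), S.J j ∧ ∃ s : u ⟶ x, Nonempty (s ≫ f ≅ j)

/-- A weak equivalence: ff and J-locally split. -/
def WeakEquiv (S : TwoSite B) {x y : B} (f : x ⟶ y) : Prop :=
  IsFF f ∧ LocallySplit S f

/-- Pronk's BF1: W contains all equivalences. -/
def BF1 (W : ∀ ⦃a b : B⦄, (a ⟶ b) → Prop) : Prop :=
  ∀ ⦃a b : B⦄ (f : a ⟶ b), IsIntEquiv f → W f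

/-- Pronk's BF2: W is closed under composition and isomorphism. -/
def BF2 (W : ∀ ⦃a b : B⦄, (a ⟶ b) → Prop) : Prop :=
  (∀ ⦃a b c : B⦄ {f : a ⟶ b} {g : b ⟶ c}, W f → W g → W (f ≫ g)) ∧
  (∀ ⦃a b : B⦄ {f g : a ⟶ b}, W f → Nonempty (f ≅ g) → W g)

/-- Pronk's BF3: cospans with one leg in W complete to 2-commuting squares. -/
def BF3 (W : ∀ ⦃a b : B⦄, (a ⟶ b) → Prop) : Prop :=
  ∀ ⦃a a' c : B⦄ (w : a' ⟶ a) (f : c ⟶ a), W w →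
    ∃ (p : B) (v : p ⟶ c) (g : p ⟶ a'), W v ∧ Nonempty (g ≫ w ≅ v ≫ f)

/-- Pronk's BF4: 2-cells into arrows of W factor, essentially uniquely. -/
def BF4 (W : ∀ ⦃a b : B⦄, (a ⟶ b) → Prop) : Prop :=
  ∀ ⦃x y z : B⦄ (f g : x ⟶ y) (w : y ⟶ z), W w → ∀ α : f ≫ w ⟶ g ≫ w,
    (∃ (x' : B) (v : x' ⟶ x) (β : v ≫ f ⟶ v ≫ g), W v ∧
       β ▷ w = (α_ v f w).hom ≫ v ◁ α ≫ (α_ v g w).inv ∧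
       (IsIso α → IsIso β)) ∧
    (∀ (x' x'' : B) (v : x' ⟶ x) (v' : x'' ⟶ x)
       (β : v ≫ f ⟶ v ≫ g) (β' : v' ≫ f ⟶ v' ≫ g), W v → W v' →
       β ▷ w = (α_ v f w).hom ≫ v ◁ α ≫ (α_ v g w).inv →
       β' ▷ w = (α_ v' f w).hom ≫ v' ◁ α ≫ (α_ v' g w).inv →
       ∃ (t : B) (u : t ⟶ x') (u' : t ⟶ x''),
         W (u ≫ v) ∧ W (u' ≫ v') ∧
         ∃ eps : u ≫ v ≅ u' ≫ v',
           eps.hom ▷ f ≫ (α_ u' v' f).hom ≫ u' ◁ β' =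
             (α_ u v f).hom ≫ u ◁ β ≫ (α_ u v g).inv ≫
               eps.hom ▷ g ≫ (α_ u' v' g).hom)

/-- A 1-arrow of the bicategory of fractions: a span with backward leg in W. -/
structure Frac1Cell (W : ∀ ⦃a b : B⦄, (a ⟶ b) → Prop) (x y : B) where
  mid : B
  back : mid ⟶ x
  fwd : mid ⟶ y
  back_mem : W back

variable {W : ∀ ⦃a b : B⦄, (a ⟶ b) → Prop}

/-- A representing diagram for a 2-arrow of the bicategory of fractions. -/
structure Frac2CellRep {x y : B} (F₁ F₂ : Frac1Cell W x y) where
  mid : B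
  p₁ : mid ⟶ F₁.mid
  p₂ : mid ⟶ F₂.mid
  mem₁ : W (p₁ ≫ F₁.back)
  mem₂ : W (p₂ ≫ F₂.back)
  α : p₁ ≫ F₁.back ≅ p₂ ≫ F₂.back
  β : p₁ ≫ F₁.fwd ⟶ p₂ ≫ F₂.fwd

/-- The equivalence of representing diagrams in Pronk's construction:
a common refinement `t` with invertible 2-cells `γ₁, γ₂` satisfying the two
pasting conditions. -/
def FracRel {x y : B} {F₁ F₂ : Frac1Cell W x y}
    (d d' : Frac2CellRep F₁ F₂) : Prop :=
  ∃ (t : B) (q : t ⟶ d.mid) (q' : t ⟶ d'.mid)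
    (γ₁ : q ≫ d.p₁ ≅ q' ≫ d'.p₁) (γ₂ : q ≫ d.p₂ ≅ q' ≫ d'.p₂),
    W (q ≫ d.p₁ ≫ F₁.back) ∧ W (q' ≫ d'.p₁ ≫ F₁.back) ∧
    q' ◁ d'.α.hom =
      (α_ q' d'.p₁ F₁.back).inv ≫ γ₁.inv ▷ F₁.back ≫
        (α_ q d.p₁ F₁.back).hom ≫ q ◁ d.α.hom ≫
        (α_ q d.p₂ F₂.back).inv ≫ γ₂.hom ▷ F₂.back ≫
        (α_ q' d'.p₂ F₂.back).hom ∧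
    q' ◁ d'.β =
      (α_ q' d'.p₁ F₁.fwd).inv ≫ γ₁.inv ▷ F₁.fwd ≫
        (α_ q d.p₁ F₁.fwd).hom ≫ q ◁ d.β ≫
        (α_ q d.p₂ F₂.fwd).inv ≫ γ₂.hom ▷ F₂.fwd ≫
        (α_ q' d'.p₂ F₂.fwd).hom

/-- 2-arrows of the bicategory of fractions: equivalence classes of diagrams. -/
def Frac2Cell {x y : B} (F₁ F₂ : Frac1Cell W x y) : Type _ :=
  Quot (FracRel (F₁ := F₁) (F₂ := F₂))

/-- Two spans are isomorphic as 1-arrows of the bicategory of fractions: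
there is a representing diagram whose 2-cell `β` is also invertible. -/
def SpanIso {x y : B} (F₁ F₂ : Frac1Cell W x y) : Prop :=
  ∃ d : Frac2CellRep F₁ F₂, IsIso d.β

/-- `V` is a cofinal subclass of `W`. -/
def CofinalIn (V W : ∀ ⦃a b : B⦄, (a ⟶ b) → Prop) : Prop :=
  (∀ ⦃a b : B⦄ {f : a ⟶ b}, V f → W f) ∧
  ∀ ⦃x y : B⦄ (f : x ⟶ y), W f →
    ∃ (z : B) (g : z ⟶ y) (s : z ⟶ x), V g ∧ Nonempty (s ≫ f ≅ g)

/-- every span with backward leg in W is isomorphic, in the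
bicategory of fractions, to one with backward leg in the cofinal class V. -/
theorem span_iso_cofinal
    (hBF : BF1 W ∧ BF2 W ∧ BF3 W ∧ BF4 W)
    (V : ∀ ⦃a b : B⦄, (a ⟶ b) → Prop) (hV : CofinalIn V W)
    {x y : B} (F : Frac1Cell W x y) :
    ∃ G : Frac1Cell W x y, V G.back ∧ SpanIso F G := by
  obtain ⟨z, g, s, hVg, ⟨e⟩⟩ := hV.2 F.back F.back_mem
  have hWg : W g := hV.1 hVg
  have hWs : W (s ≫ F.back) := hBF.2.1.2 hWg ⟨e.symm⟩
  refine ⟨⟨z, g, s ≫ F.fwd, hWg⟩, hVg,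
    ⟨⟨z, s, 𝟙 z, hWs, hBF.2.1.2 hWg ⟨(λ_ g).symm⟩, e ≪≫ (λ_ g).symm,
      (λ_ (s ≫ F.fwd)).inv⟩, ?_⟩⟩
  dsimp
  infer_instance
end

section
/- Let K be a locally essentially small 2-category with a class W of 1-arrows satisfying BF1–BF4. If there exists a locally small cofinal subclass V ⊆ W (for each object y the arrows of V with codomain y form a set), then the bicategory of fractions K[W⁻¹] is locally essentially small: each hom-category K[W⁻¹](x,y) is equivalent to a small category. -/
open CategoryTheory Bicategory

universe w v u

variable {B : Type u} [Bicategory.{w, v} B]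

variable {W : ∀ ⦃a b : B⦄, (a ⟶ b) → Prop}

universe w'

/-- Auxiliary small index type for 1-arrows. -/
def SpanIndex (V : ∀ ⦃a b : B⦄, (a ⟶ b) → Prop) (x y : B) : Type _ :=
  Σ zg : Σ z : B, { g : z ⟶ x // V g }, Skeleton (zg.1 ⟶ y)

/-- Auxiliary map realizing a span index as a span. -/
noncomputable def spanIndexMap {V : ∀ ⦃a b : B⦄, (a ⟶ b) → Prop}
    (hVW : ∀ ⦃a b : B⦄ {f : a ⟶ b}, V f → W f) (x y : B) :
    SpanIndex V x y → Quot (fun F G : Frac1Cell W x y => SpanIso F G) :=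
  fun t => Quot.mk _ ⟨t.1.1, t.1.2.1, Quotient.out t.2, hVW t.1.2.2⟩

/-- Auxiliary small index type for 2-arrows. -/
def FracIndex (V : ∀ ⦃a b : B⦄, (a ⟶ b) → Prop) {x y : B}
    (F₁ F₂ : Frac1Cell W x y) : Type _ :=
  Σ (zg : Σ z : B, { g : z ⟶ x // V g })
    (k₁ : Skeleton (zg.1 ⟶ F₁.mid)) (k₂ : Skeleton (zg.1 ⟶ F₂.mid)),
    { pr : (Quotient.out k₁ ≫ F₁.back ≅ Quotient.out k₂ ≫ F₂.back) ×
           (Quotient.out k₁ ≫ F₁.fwd ⟶ Quotient.out k₂ ≫ F₂.fwd) //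
      W (Quotient.out k₁ ≫ F₁.back) ∧ W (Quotient.out k₂ ≫ F₂.back) }

/-- Auxiliary map realizing a fraction index as a 2-arrow. -/
noncomputable def fracIndexMap {V : ∀ ⦃a b : B⦄, (a ⟶ b) → Prop} {x y : B}
    (F₁ F₂ : Frac1Cell W x y) : FracIndex V F₁ F₂ → Frac2Cell F₁ F₂ :=
  fun t => Quot.mk _ ⟨t.1.1, Quotient.out t.2.1, Quotient.out t.2.2.1,
    t.2.2.2.2.1, t.2.2.2.2.2, t.2.2.2.1.1, t.2.2.2.1.2⟩

/-- if K is locally essentially small, W satisfies BF1–BF4 and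
has a locally small cofinal subclass V, then the bicategory of fractions is
locally essentially small: for all x, y the collection of 1-arrows up to
isomorphism is small, and each collection of 2-arrows is small. -/
theorem fractions_locally_essentially_small
    (hK : ∀ x y : B, EssentiallySmall.{w'} (x ⟶ y))
    (hBF : BF1 W ∧ BF2 W ∧ BF3 W ∧ BF4 W)
    (V : ∀ ⦃a b : B⦄, (a ⟶ b) → Prop) (hV : CofinalIn V W)
    (hVsmall : ∀ y : B, Small.{w'} (Σ z : B, { g : z ⟶ y // V g })) :
    ∀ x y : B,
      Small.{w'} (Quot (fun F G : Frac1Cell W x y => SpanIso F G)) ∧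
      ∀ F₁ F₂ : Frac1Cell W x y, Small.{w'} (Frac2Cell F₁ F₂) := by
  obtain ⟨-, hBF2, -, -⟩ := hBF
  -- W is closed under isomorphism
  have hWiso : ∀ ⦃a b : B⦄ {f g : a ⟶ b}, W f → (f ≅ g) → W g :=
    fun _ _ _ _ hf e => hBF2.2 hf ⟨e⟩
  intro x y
  haveI := hVsmall x
  haveI : ∀ (z c : B), Small.{w'} (Skeleton (z ⟶ c)) := fun z c =>
    ((essentiallySmall_iff _).mp (hK z c)).1
  haveI : ∀ (z c : B), LocallySmall.{w'} (z ⟶ c) := fun z c =>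
    ((essentiallySmall_iff _).mp (hK z c)).2
  haveI : ∀ (z c : B) (f g : z ⟶ c), Small.{w'} (f ≅ g) := fun z c f g =>
    small_of_injective (f := Iso.hom) (fun _ _ h => Iso.ext h)
  constructor
  · -- 1-arrows up to isomorphism form a small collection
    haveI : Small.{w'} (SpanIndex V x y) := by unfold SpanIndex; infer_instance
    have hsurj : Function.Surjective (spanIndexMap (W := W) hV.1 x y) := by
      rintro ⟨F⟩
      obtain ⟨z, g, s, hg, ⟨φ⟩⟩ := hV.2 F.back F.back_mem
      refine ⟨⟨⟨z, g, hg⟩, toSkeleton (s ≫ F.fwd)⟩, ?_⟩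
      apply (Quot.sound _).symm
      have e : s ≫ F.fwd ≅ Quotient.out (toSkeleton (s ≫ F.fwd)) :=
        (fromSkeletonToSkeletonIso (s ≫ F.fwd)).symm
      refine ⟨⟨z, s, 𝟙 z, hWiso (hV.1 hg) φ.symm,
        hWiso (hV.1 hg) (λ_ g).symm, φ ≪≫ (λ_ g).symm,
        e.hom ≫ (λ_ _).inv⟩, ?_⟩
      show IsIso (e.hom ≫ (λ_ _).inv)
      infer_instance
    exact small_of_surjective hsurj
  · -- 2-arrows form a small collection
    intro F₁ F₂
    haveI : Small.{w'} (FracIndex V F₁ F₂) := by unfold FracIndex; infer_instance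
    have hsurj : Function.Surjective (fracIndexMap (V := V) F₁ F₂) := by
      rintro ⟨d⟩
      obtain ⟨z, g, s, hg, ⟨φ⟩⟩ := hV.2 (d.p₁ ≫ F₁.back) d.mem₁
      set P₁ : z ⟶ F₁.mid := Quotient.out (toSkeleton (s ≫ d.p₁)) with hP₁
      set P₂ : z ⟶ F₂.mid := Quotient.out (toSkeleton (s ≫ d.p₂)) with hP₂
      have e₁ : s ≫ d.p₁ ≅ P₁ := (fromSkeletonToSkeletonIso (s ≫ d.p₁)).symm
      have e₂ : s ≫ d.p₂ ≅ P₂ := (fromSkeletonToSkeletonIso (s ≫ d.p₂)).symm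
      -- the transported comparison data
      set α₂ : P₁ ≫ F₁.back ≅ P₂ ≫ F₂.back :=
        whiskerRightIso e₁.symm F₁.back ≪≫ α_ s d.p₁ F₁.back ≪≫
          whiskerLeftIso s d.α ≪≫ (α_ s d.p₂ F₂.back).symm ≪≫ whiskerRightIso e₂ F₂.back
        with hα₂def
      set β₂ : P₁ ≫ F₁.fwd ⟶ P₂ ≫ F₂.fwd :=
        e₁.inv ▷ F₁.fwd ≫ (α_ s d.p₁ F₁.fwd).hom ≫ s ◁ d.β ≫
          (α_ s d.p₂ F₂.fwd).inv ≫ e₂.hom ▷ F₂.fwd with hβ₂def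
      have hm₁ : W (P₁ ≫ F₁.back) :=
        hWiso (hV.1 hg) (φ.symm ≪≫ (α_ s d.p₁ F₁.back).symm ≪≫ whiskerRightIso e₁ F₁.back)
      have hm₂ : W (P₂ ≫ F₂.back) :=
        hWiso (hV.1 hg) (φ.symm ≪≫ whiskerLeftIso s d.α ≪≫ (α_ s d.p₂ F₂.back).symm ≪≫
          whiskerRightIso e₂ F₂.back)
      refine ⟨⟨⟨z, g, hg⟩, toSkeleton (s ≫ d.p₁), toSkeleton (s ≫ d.p₂),
        ⟨(α₂, β₂), hm₁, hm₂⟩⟩, ?_⟩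
      apply (Quot.sound _).symm
      refine ⟨z, s, 𝟙 z, e₁ ≪≫ (λ_ P₁).symm, e₂ ≪≫ (λ_ P₂).symm,
        hWiso (hV.1 hg) φ.symm,
        hWiso (hV.1 hg) (φ.symm ≪≫ (α_ s d.p₁ F₁.back).symm ≪≫ whiskerRightIso e₁ F₁.back ≪≫
          (λ_ (P₁ ≫ F₁.back)).symm), ?_, ?_⟩
      · show 𝟙 z ◁ α₂.hom = _
        rw [hα₂def]
        simp only [Iso.trans_inv, Iso.trans_hom, Iso.symm_hom, Iso.symm_inv,
          whiskerRightIso_hom, whiskerRightIso_inv, whiskerLeftIso_hom]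
        bicategory
      · show 𝟙 z ◁ β₂ = _
        rw [hβ₂def]
        simp only [Iso.trans_inv, Iso.trans_hom, Iso.symm_hom, Iso.symm_inv,
          whiskerRightIso_hom, whiskerRightIso_inv, whiskerLeftIso_hom]
        bicategory

    exact small_of_surjective hsurj
end
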